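/- (Proposition 1) For all x, z ∈ ℝ^n, the Metropolis-Hastings acceptance ratio for the low-rank independence sampler satisfies h(z)g(x)/(h(x)g(z)) = w(z)/w(x), where w(x) = exp(−(1/2) xᵀ (Γ_cond^{-1} − Γ̂_cond^{-1}) x); in particular, the mean terms involving x_cond and x̂_cond cancel because Γ_cond^{-1} x_cond = μAᵀb = Γ̂_cond^{-1} x̂_cond. -/

import Mathlib

open Matrix

variable {n : ℕ}

lemma psd_smul {c : ℝ} (hc : 0 ≤ c) {M : Matrix (Fin n) (Fin n) ℝ} (hM : M.PosSemidef) :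
    (c • M).PosSemidef := by
  refine PosSemidef.of_dotProduct_mulVec_nonneg ?_ (fun x => ?_)
  · unfold Matrix.IsHermitian
    rw [conjTranspose_smul, star_trivial, hM.1.eq]
  · rw [smul_mulVec, dotProduct_smul, smul_eq_mul]
    exact mul_nonneg hc (hM.dotProduct_mulVec_nonneg x)

lemma pd_smul {c : ℝ} (hc : 0 < c) {M : Matrix (Fin n) (Fin n) ℝ} (hM : M.PosDef) :
    (c • M).PosDef := by
  refine PosDef.of_dotProduct_mulVec_pos ?_ (fun x hx => ?_)
  · unfold Matrix.IsHermitian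
    rw [conjTranspose_smul, star_trivial, hM.1.eq]
  · rw [smul_mulVec, dotProduct_smul, smul_eq_mul]
    exact mul_pos hc (hM.dotProduct_mulVec_pos hx)

lemma psd_vmv (v : Fin n → ℝ) : (vecMulVec v v).PosSemidef := by
  refine PosSemidef.of_dotProduct_mulVec_nonneg ?_ (fun x => ?_)
  · ext i j
    simp [conjTranspose_apply, vecMulVec_apply, mul_comm]
  · have hmv : vecMulVec v v *ᵥ x = (v ⬝ᵥ x) • v := by
      ext j
      simp [vecMulVec_apply, mulVec, dotProduct, Finset.mul_sum, mul_comm, mul_left_comm, mul_assoc]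
    rw [hmv, star_trivial, dotProduct_smul, smul_eq_mul, dotProduct_comm]
    exact mul_self_nonneg _

lemma pd_LtL {L : Matrix (Fin n) (Fin n) ℝ} (hL : IsUnit L.det) : (Lᵀ * L).PosDef := by
  refine PosDef.of_dotProduct_mulVec_pos ?_ (fun x hx => ?_)
  · rw [← conjTranspose_eq_transpose_of_trivial]
    exact isHermitian_conjTranspose_mul_self L
  · have hLx : L *ᵥ x ≠ 0 := by
      intro h
      exact hx (Matrix.mulVec_injective_iff_isUnit.mpr ((isUnit_iff_isUnit_det L).2 hL)
        (by simpa using h))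
    rw [star_trivial, ← mulVec_mulVec, dotProduct_mulVec, ← transpose_transpose L,
      vecMul_transpose, transpose_transpose]
    have h0 : (L *ᵥ x) ⬝ᵥ (L *ᵥ x) ≠ 0 := fun h => hLx (dotProduct_self_eq_zero.mp h)
    have h1 : 0 ≤ (L *ᵥ x) ⬝ᵥ (L *ᵥ x) := Finset.sum_nonneg fun i _ => mul_self_nonneg _
    exact lt_of_le_of_ne h1 (Ne.symm h0)

lemma quad_expand {P : Matrix (Fin n) (Fin n) ℝ} (hP : Pᵀ = P) {a s : Fin n → ℝ}
    (has : P *ᵥ a = s) (x : Fin n → ℝ) :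
    (x - a) ⬝ᵥ (P *ᵥ (x - a)) = x ⬝ᵥ (P *ᵥ x) - 2 * (x ⬝ᵥ s) + a ⬝ᵥ s := by
  have h1 : a ⬝ᵥ (P *ᵥ x) = x ⬝ᵥ s := by
    rw [dotProduct_mulVec, ← hP, vecMul_transpose, has, dotProduct_comm]
  have h2 : x ⬝ᵥ (P *ᵥ a) = x ⬝ᵥ s := by rw [has]
  rw [mulVec_sub, dotProduct_sub, sub_dotProduct, sub_dotProduct, h1, h2, has]
  ring

lemma ratio_helper {c1 c2 : ℝ} (h1 : 0 < c1) (h2 : 0 < c2) (a1 a2 a3 a4 b1 b2 : ℝ)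
    (hE : a1 + a2 - (a3 + a4) = b1 - b2) :
    (c1 * Real.exp a1) * (c2 * Real.exp a2) / ((c1 * Real.exp a3) * (c2 * Real.exp a4)) =
      Real.exp b1 / Real.exp b2 := by
  have e1 : (c1 * Real.exp a1) * (c2 * Real.exp a2) = (c1 * c2) * Real.exp (a1 + a2) := by
    rw [Real.exp_add]; ring
  have e2 : (c1 * Real.exp a3) * (c2 * Real.exp a4) = (c1 * c2) * Real.exp (a3 + a4) := by
    rw [Real.exp_add]; ring
  rw [e1, e2, mul_div_mul_left _ _ (mul_pos h1 h2).ne', ← Real.exp_sub, hE, Real.exp_sub]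

open Matrix MeasureTheory ProbabilityTheory Finset

noncomputable section

theorem stmt4
    (m n : ℕ) (hm : 0 < m) (hn : 0 < n)
    (A : Matrix (Fin m) (Fin n) ℝ) (L : Matrix (Fin n) (Fin n) ℝ) (hL : IsUnit L.det)
    (μ σ : ℝ) (hμ : 0 < μ) (hσ : 0 < σ)
    (b : Fin m → ℝ)
    (v : Fin n → Fin n → ℝ) (lam : Fin n → ℝ)
    (horth : ∀ i j, v i ⬝ᵥ v j = if i = j then (1 : ℝ) else 0)
    (hlam_nonneg : ∀ j, 0 ≤ lam j) (hlam_anti : Antitone lam)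
    (hHdecomp : (L⁻¹)ᵀ * Aᵀ * A * L⁻¹ = ∑ j, lam j • vecMulVec (v j) (v j))
    (k : ℕ) (hk : k ≤ n)
    (Γcond : Matrix (Fin n) (Fin n) ℝ)
    (hΓcond : Γcond = (μ • (Aᵀ * A) + σ • (Lᵀ * L))⁻¹)
    (Γhat : Matrix (Fin n) (Fin n) ℝ)
    (hΓhat : Γhat = L⁻¹ * (σ • (1 : Matrix (Fin n) (Fin n) ℝ) +
        μ • ∑ j ∈ Finset.univ.filter (fun j : Fin n => (j : ℕ) < k),
          lam j • vecMulVec (v j) (v j))⁻¹ * (L⁻¹)ᵀ)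
    (xcond : Fin n → ℝ) (hxcond : xcond = μ • (Γcond *ᵥ (Aᵀ *ᵥ b)))
    (xhat : Fin n → ℝ) (hxhat : xhat = μ • (Γhat *ᵥ (Aᵀ *ᵥ b)))
    (w : (Fin n → ℝ) → ℝ)
    (hw : ∀ x, w x = Real.exp (-(1/2) * (x ⬝ᵥ ((Γcond⁻¹ - Γhat⁻¹) *ᵥ x))))
    (hfun : (Fin n → ℝ) → ℝ)
    (hhfun : ∀ x, hfun x = (2 * Real.pi) ^ (-(n : ℝ) / 2) * Γcond.det ^ (-(1 : ℝ) / 2) *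
        Real.exp (-(1/2) * ((x - xcond) ⬝ᵥ (Γcond⁻¹ *ᵥ (x - xcond)))))
    (gfun : (Fin n → ℝ) → ℝ)
    (hgfun : ∀ x, gfun x = (2 * Real.pi) ^ (-(n : ℝ) / 2) * Γhat.det ^ (-(1 : ℝ) / 2) *
        Real.exp (-(1/2) * ((x - xhat) ⬝ᵥ (Γhat⁻¹ *ᵥ (x - xhat)))))
    :
    (∀ x z : Fin n → ℝ, hfun z * gfun x / (hfun x * gfun z) = w z / w x) ∧
    Γcond⁻¹ *ᵥ xcond = μ • (Aᵀ *ᵥ b) ∧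
    Γhat⁻¹ *ᵥ xhat = μ • (Aᵀ *ᵥ b) := by
  -- positive definiteness of B
  have hAtA : (Aᵀ * A).PosSemidef := by
    rw [← conjTranspose_eq_transpose_of_trivial]
    exact posSemidef_conjTranspose_mul_self A
  have hB : (μ • (Aᵀ * A) + σ • (Lᵀ * L)).PosDef :=
    Matrix.PosDef.posSemidef_add (psd_smul hμ.le hAtA) (pd_smul hσ (pd_LtL hL))
  have hBdet : IsUnit (μ • (Aᵀ * A) + σ • (Lᵀ * L)).det := hB.det_pos.ne'.isUnit
  -- positive definiteness of M
  have hSum : (∑ j ∈ Finset.univ.filter (fun j : Fin n => (j : ℕ) < k),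
      lam j • vecMulVec (v j) (v j)).PosSemidef :=
    Finset.sum_induction _ Matrix.PosSemidef (fun a b ha hb => ha.add hb) .zero
      (fun j _ => psd_smul (hlam_nonneg j) (psd_vmv _))
  have hM : (σ • (1 : Matrix (Fin n) (Fin n) ℝ) +
      μ • ∑ j ∈ Finset.univ.filter (fun j : Fin n => (j : ℕ) < k),
        lam j • vecMulVec (v j) (v j)).PosDef :=
    (pd_smul hσ Matrix.PosDef.one).add_posSemidef (psd_smul hμ.le hSum)
  set M := σ • (1 : Matrix (Fin n) (Fin n) ℝ) +
      μ • ∑ j ∈ Finset.univ.filter (fun j : Fin n => (j : ℕ) < k),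
        lam j • vecMulVec (v j) (v j) with hMdef
  have hMdetU : IsUnit M.det := hM.det_pos.ne'.isUnit
  have hMsymm : Mᵀ = M :=
    (conjTranspose_eq_transpose_of_trivial M).symm.trans hM.isHermitian.eq
  -- Γcond facts
  have hΓcInv : Γcond⁻¹ = μ • (Aᵀ * A) + σ • (Lᵀ * L) := by
    rw [hΓcond]; exact nonsing_inv_nonsing_inv _ hBdet
  have hΓcdet : 0 < Γcond.det := by
    rw [hΓcond, det_nonsing_inv, Ring.inverse_eq_inv']
    exact inv_pos.mpr hB.det_pos
  have hΓcsymm : (Γcond⁻¹)ᵀ = Γcond⁻¹ := by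
    rw [hΓcInv]
    exact (conjTranspose_eq_transpose_of_trivial _).symm.trans hB.isHermitian.eq
  -- Γhat facts
  have hΓhdet : 0 < Γhat.det := by
    have hdet : Γhat.det = L.det⁻¹ * M.det⁻¹ * L.det⁻¹ := by
      rw [hΓhat]
      simp [det_mul, det_transpose, det_nonsing_inv, Ring.inverse_eq_inv']
    rw [hdet]
    have h1 : (0:ℝ) < M.det⁻¹ := inv_pos.mpr hM.det_pos
    have h2 : L.det⁻¹ ≠ 0 := inv_ne_zero hL.ne_zero
    nlinarith [mul_self_pos.mpr h2]
  have hΓhdetU : IsUnit Γhat.det := hΓhdet.ne'.isUnit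
  have hΓhsymm : Γhatᵀ = Γhat := by
    rw [hΓhat, transpose_mul, transpose_mul, transpose_transpose,
      transpose_nonsing_inv, hMsymm, Matrix.mul_assoc]
  have hΓhInvsymm : (Γhat⁻¹)ᵀ = Γhat⁻¹ := by
    rw [transpose_nonsing_inv, hΓhsymm]
  -- mean identities
  have hΓcdetU : IsUnit Γcond.det := hΓcdet.ne'.isUnit
  have hc : Γcond⁻¹ *ᵥ xcond = μ • (Aᵀ *ᵥ b) := by
    rw [hxcond, mulVec_smul, mulVec_mulVec, nonsing_inv_mul _ hΓcdetU, one_mulVec]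
  have hh : Γhat⁻¹ *ᵥ xhat = μ • (Aᵀ *ᵥ b) := by
    rw [hxhat, mulVec_smul, mulVec_mulVec, nonsing_inv_mul _ hΓhdetU, one_mulVec]
  refine ⟨?_, hc, hh⟩
  intro x z
  have hch : 0 < (2 * Real.pi) ^ (-(n : ℝ) / 2) * Γcond.det ^ (-(1 : ℝ) / 2) :=
    mul_pos (Real.rpow_pos_of_pos (by positivity) _) (Real.rpow_pos_of_pos hΓcdet _)
  have hcg : 0 < (2 * Real.pi) ^ (-(n : ℝ) / 2) * Γhat.det ^ (-(1 : ℝ) / 2) :=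
    mul_pos (Real.rpow_pos_of_pos (by positivity) _) (Real.rpow_pos_of_pos hΓhdet _)
  have key : ∀ y : Fin n → ℝ, y ⬝ᵥ ((Γcond⁻¹ - Γhat⁻¹) *ᵥ y) =
      y ⬝ᵥ (Γcond⁻¹ *ᵥ y) - y ⬝ᵥ (Γhat⁻¹ *ᵥ y) := fun y => by
    rw [sub_mulVec, dotProduct_sub]
  have qc := quad_expand hΓcsymm hc
  have qh := quad_expand hΓhInvsymm hh
  rw [hhfun, hhfun, hgfun, hgfun, hw, hw]
  refine ratio_helper hch hcg _ _ _ _ _ _ ?_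
  rw [qc z, qc x, qh x, qh z, key z, key x]
  ring
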